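/- arXiv:1409.7565 — 2 statements merged into one kernel-verified Lean document; each statement's English description precedes it below -/
import Mathlib

section
/- For every compact linear operator T on an infinite-dimensional Hilbert space H mapping into a Banach space Y, the Weyl numbers and approximation numbers coincide: x_n(T : H → Y) = a_n(T : H → Y) for all n ∈ ℕ. -/
open scoped ENNReal

instance : Fact ((1 : ℝ≥0∞) ≤ 2) := ⟨one_le_two⟩

/-- The sequence space `ℓ₂` of square-summable complex sequences. -/
noncomputable abbrev ellTwo : Type := lp (fun _ : ℕ => ℂ) 2

/-- The `n`-th approximation number: `a_n(T) = inf {‖T - F‖ : rank F < n}`. -/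
noncomputable def approxNum {E F : Type*} [NormedAddCommGroup E] [NormedSpace ℂ E]
    [NormedAddCommGroup F] [NormedSpace ℂ F] (T : E →L[ℂ] F) (n : ℕ) : ℝ :=
  sInf {r : ℝ | ∃ G : E →L[ℂ] F,
    Module.rank ℂ (LinearMap.range (G : E →ₗ[ℂ] F)) < (n : Cardinal) ∧ r = ‖T - G‖}

/-- The `n`-th Weyl number: `x_n(T) = sup {a_n(T ∘ A) : A : ℓ₂ → E, ‖A‖ ≤ 1}`. -/
noncomputable def weylNum {E F : Type*} [NormedAddCommGroup E] [NormedSpace ℂ E]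
    [NormedAddCommGroup F] [NormedSpace ℂ F] (T : E →L[ℂ] F) (n : ℕ) : ℝ :=
  sSup {r : ℝ | ∃ A : ellTwo →L[ℂ] E, ‖A‖ ≤ 1 ∧ r = approxNum (T.comp A) n}

open Filter

open scoped ComplexConjugate

section Helpers

variable {E F W : Type*} [NormedAddCommGroup E] [NormedSpace ℂ E]
    [NormedAddCommGroup F] [NormedSpace ℂ F] [NormedAddCommGroup W] [NormedSpace ℂ W]

lemma approxNum_set_bddBelow (T : E →L[ℂ] F) (n : ℕ) :
    BddBelow {r : ℝ | ∃ G : E →L[ℂ] F,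
      Module.rank ℂ (LinearMap.range (G : E →ₗ[ℂ] F)) < (n : Cardinal) ∧ r = ‖T - G‖} := by
  refine ⟨0, ?_⟩
  rintro r ⟨G, -, rfl⟩
  exact norm_nonneg _

lemma approxNum_set_nonempty (T : E →L[ℂ] F) {n : ℕ} (hn : 1 ≤ n) :
    Set.Nonempty {r : ℝ | ∃ G : E →L[ℂ] F,
      Module.rank ℂ (LinearMap.range (G : E →ₗ[ℂ] F)) < (n : Cardinal) ∧ r = ‖T - G‖} := by
  refine ⟨‖T‖, 0, ?_, by simp⟩
  have : LinearMap.range ((0 : E →L[ℂ] F) : E →ₗ[ℂ] F) = ⊥ := by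
    simp
  rw [this, rank_bot]
  exact_mod_cast Nat.lt_of_lt_of_le Nat.zero_lt_one hn

lemma approxNum_nonneg (T : E →L[ℂ] F) {n : ℕ} (hn : 1 ≤ n) : 0 ≤ approxNum T n :=
  le_csInf (approxNum_set_nonempty T hn) (by rintro r ⟨G, -, rfl⟩; exact norm_nonneg _)

lemma approxNum_comp_le (T : E →L[ℂ] F) {n : ℕ} (hn : 1 ≤ n) (A : W →L[ℂ] E) (hA : ‖A‖ ≤ 1) :
    approxNum (T.comp A) n ≤ approxNum T n := by
  refine le_csInf (approxNum_set_nonempty T hn) ?_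
  rintro r ⟨G', hG', rfl⟩
  have hmem : ‖T.comp A - G'.comp A‖ ∈ {r : ℝ | ∃ G : W →L[ℂ] F,
      Module.rank ℂ (LinearMap.range (G : W →ₗ[ℂ] F)) < (n : Cardinal) ∧ r = ‖T.comp A - G‖} := by
    refine ⟨G'.comp A, lt_of_le_of_lt ?_ hG', rfl⟩
    refine Submodule.rank_mono ?_
    rw [ContinuousLinearMap.toLinearMap_comp]
    exact LinearMap.range_comp_le_range _ _
  refine (csInf_le (approxNum_set_bddBelow _ _) hmem).trans ?_
  have : T.comp A - G'.comp A = (T - G').comp A := by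
    ext x; simp
  rw [this]
  calc ‖(T - G').comp A‖ ≤ ‖T - G'‖ * ‖A‖ := ContinuousLinearMap.opNorm_comp_le _ _
    _ ≤ ‖T - G'‖ * 1 := by
        exact mul_le_mul_of_nonneg_left hA (norm_nonneg _)
    _ = ‖T - G'‖ := mul_one _

end Helpers

section Compact

variable {H Y : Type*} [NormedAddCommGroup H] [InnerProductSpace ℂ H] [CompleteSpace H]
    [NormedAddCommGroup Y] [NormedSpace ℂ Y]

local notation "⟪" x ", " y "⟫" => @inner ℂ _ _ x y

lemma exists_norm_image_lt_of_orthonormal (T : H →L[ℂ] Y)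
    (hT : IsCompactOperator (T : H → Y)) {g : ℕ → H} (hg : Orthonormal ℂ g)
    {δ : ℝ} (hδ : 0 < δ) : ∃ m, ‖T (g m)‖ < δ := by
  by_contra hcon
  push_neg at hcon
  have hT' : IsCompactOperator ((T : H →ₗ[ℂ] Y) : H → Y) := hT
  have hK : IsCompact (closure ((T : H →ₗ[ℂ] Y) '' Metric.closedBall 0 1)) :=
    hT'.isCompact_closure_image_closedBall (𝕜₁ := ℂ) 1
  have hmem : ∀ m, T (g m) ∈ closure ((T : H →ₗ[ℂ] Y) '' Metric.closedBall 0 1) := by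
    intro m
    refine subset_closure ⟨g m, ?_, rfl⟩
    simp [Metric.mem_closedBall, dist_eq_norm, hg.1 m]
  obtain ⟨y, -, φ, hφ, hconv⟩ := hK.tendsto_subseq hmem
  have hy : y = 0 := by
    refine NormedSpace.eq_zero_of_forall_dual_eq_zero ℂ fun ψ => ?_
    set v : H := (InnerProductSpace.toDual ℂ H).symm (ψ.comp T) with hv
    have hvx : ∀ x, ψ (T x) = ⟪v, x⟫ := by
      intro x
      rw [hv, InnerProductSpace.toDual_symm_apply]
      rfl
    have hsum : Summable fun m => ‖⟪v, g m⟫‖ ^ 2 := by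
      have := hg.inner_products_summable v
      simpa [norm_inner_symm] using this
    have h1 : Tendsto (fun m => ‖⟪v, g m⟫‖ ^ 2) atTop (nhds 0) := hsum.tendsto_atTop_zero
    have h2 : Tendsto (fun m => ‖⟪v, g m⟫‖) atTop (nhds 0) := by
      have := (Real.continuous_sqrt.tendsto 0).comp h1
      simpa [Function.comp_def, Real.sqrt_sq_eq_abs, abs_of_nonneg (norm_nonneg _)] using this
    have h3 : Tendsto (fun m => ⟪v, g m⟫) atTop (nhds 0) :=
      tendsto_zero_iff_norm_tendsto_zero.2 h2
    have h4 : Tendsto (fun m => ψ (T (g (φ m)))) atTop (nhds (ψ y)) :=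
      (ψ.continuous.tendsto y).comp hconv
    have h5 : Tendsto (fun m => ψ (T (g (φ m)))) atTop (nhds 0) := by
      simp only [hvx]
      exact h3.comp hφ.tendsto_atTop
    exact tendsto_nhds_unique h4 h5
  have h6 : Tendsto (fun m => ‖T (g (φ m))‖) atTop (nhds 0) := by
    rw [hy] at hconv
    simpa using hconv.norm
  have h7 : ∀ᶠ m in atTop, ‖T (g (φ m))‖ < δ :=
    h6.eventually_lt_const hδ
  obtain ⟨m, hm⟩ := h7.exists
  exact absurd (hcon (φ m)) (not_le.2 hm)

end Compact

section Maximal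

variable {H Y : Type*} [NormedAddCommGroup H] [InnerProductSpace ℂ H] [CompleteSpace H]
    [NormedAddCommGroup Y] [NormedSpace ℂ Y]

local notation "⟪" x ", " y "⟫" => @inner ℂ _ _ x y

lemma exists_finite_orthonormal_proj (T : H →L[ℂ] Y)
    (hT : IsCompactOperator (T : H → Y)) {δ : ℝ} (hδ : 0 < δ) :
    ∃ (m : ℕ) (f : Fin m → H), Orthonormal ℂ f ∧
      ∀ x : H, ‖T x - T (∑ k, ⟪f k, x⟫ • f k)‖ ≤ δ * ‖x‖ := by
  classical
  set V : Set H := {x | δ < ‖T x‖} with hV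
  set C : Set (Set H) := {s | s ⊆ V ∧ Orthonormal ℂ (Subtype.val : s → H)} with hC
  obtain ⟨S, hS⟩ := zorn_subset C (by
    intro c hcC hchain
    refine ⟨⋃₀ c, ⟨Set.sUnion_subset fun s hs => (hcC hs).1, ?_⟩,
      fun s hs => Set.subset_sUnion_of_mem hs⟩
    exact orthonormal_sUnion_of_directed hchain.directedOn fun a ha => (hcC ha).2)
  have hSV : S ⊆ V := hS.prop.1
  have hSo : Orthonormal ℂ (Subtype.val : S → H) := hS.prop.2
  have hfin : S.Finite := by
    by_contra hinfS
    have hinf' : S.Infinite := hinfS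
    let e := hinf'.natEmbedding
    have hg : Orthonormal ℂ (fun m => ((e m : S) : H)) := hSo.comp e e.injective
    obtain ⟨m, hm⟩ := exists_norm_image_lt_of_orthonormal T hT hg hδ
    have h2 : δ < ‖T ((e m : S) : H)‖ := hSV (e m).2
    linarith
  have hperp : ∀ y : H, (∀ s ∈ S, ⟪s, y⟫ = 0) → ‖T y‖ ≤ δ * ‖y‖ := by
    intro y hy
    rcases eq_or_ne y 0 with rfl | hy0
    · simp
    by_contra hnot
    push_neg at hnot
    have hyn : (0:ℝ) < ‖y‖ := norm_pos_iff.2 hy0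
    set u : H := ((‖y‖⁻¹ : ℝ) : ℂ) • y with hu
    have hun : ‖u‖ = 1 := by
      rw [hu, norm_smul]
      simp [abs_of_nonneg (inv_nonneg.2 hyn.le), inv_mul_cancel₀ hyn.ne']
    have hTu : ‖T u‖ = ‖y‖⁻¹ * ‖T y‖ := by
      rw [hu, map_smul, norm_smul]
      simp [abs_of_nonneg (inv_nonneg.2 hyn.le)]
    have huV : u ∈ V := by
      rw [hV]
      simp only [Set.mem_setOf_eq]
      rw [hTu]
      calc δ = δ * ‖y‖ * ‖y‖⁻¹ := by field_simp
        _ < ‖T y‖ * ‖y‖⁻¹ := mul_lt_mul_of_pos_right hnot (inv_pos.2 hyn)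
        _ = ‖y‖⁻¹ * ‖T y‖ := mul_comm _ _
    have huS : u ∉ S := by
      intro hus
      have h0 := hy u hus
      rw [hu, inner_smul_left] at h0
      have h2 : ⟪y, y⟫ ≠ 0 := inner_self_ne_zero.2 hy0
      simp only [Complex.conj_ofReal, mul_eq_zero] at h0
      rcases h0 with h0 | h0
      · exact (inv_ne_zero hyn.ne') (by exact_mod_cast h0)
      · exact h2 h0
    have hins : insert u S ∈ C := by
      have hSo' := orthonormal_subtype_iff_ite.1 hSo
      constructor
      · exact Set.insert_subset huV hSV
      · rw [orthonormal_subtype_iff_ite]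
        intro v hv w hw
        rcases Set.mem_insert_iff.1 hv with hveq | hvS
        · rcases Set.mem_insert_iff.1 hw with hweq | hwS
          · rw [hveq, hweq, if_pos rfl, inner_self_eq_norm_sq_to_K, hun]
            norm_num
          · have h0 : ⟪w, u⟫ = 0 := by
              rw [hu, inner_smul_right, hy w hwS, mul_zero]
            have h1 : ⟪u, w⟫ = 0 := by rw [← inner_conj_symm, h0, map_zero]
            rw [hveq, h1, if_neg]
            intro hvw
            exact huS (hvw ▸ hwS)
        · rcases Set.mem_insert_iff.1 hw with hweq | hwS
          · have h0 : ⟪v, u⟫ = 0 := by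
              rw [hu, inner_smul_right, hy v hvS, mul_zero]
            rw [hweq, h0, if_neg]
            intro hvw
            exact huS (hvw ▸ hvS)
          · exact hSo' v hvS w hwS
    exact huS (by
      rw [← hS.eq_of_ge hins (Set.subset_insert u S)]
      exact Set.mem_insert u S)
  haveI := hfin.fintype
  let e := Fintype.equivFin ↥S
  set f : Fin (Fintype.card ↥S) → H := fun k => ((e.symm k : S) : H) with hf
  have hfo : Orthonormal ℂ f := hSo.comp e.symm e.symm.injective
  refine ⟨Fintype.card ↥S, f, hfo, fun x => ?_⟩
  set P : H := ∑ k, ⟪f k, x⟫ • f k with hP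
  have hyp : ∀ j, ⟪f j, x - P⟫ = 0 := by
    intro j
    rw [inner_sub_right, hP, hfo.inner_right_fintype, sub_self]
  have hyS : ∀ s ∈ S, ⟪s, x - P⟫ = 0 := by
    intro s hs
    have h1 := hyp (e ⟨s, hs⟩)
    simpa [hf] using h1
  have hTy := hperp (x - P) hyS
  have h0 : ⟪P, x - P⟫ = 0 := by
    nth_rewrite 1 [hP]
    rw [sum_inner]
    refine Finset.sum_eq_zero fun k _ => ?_
    rw [inner_smul_left, hyp k, mul_zero]
  have horth : ⟪x - P, P⟫ = 0 := by
    rw [← inner_conj_symm, h0, map_zero]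
  have hPn : ‖x - P‖ ≤ ‖x‖ := by
    have hsq := @norm_add_sq ℂ _ _ _ _ (x - P) P
    rw [sub_add_cancel, horth] at hsq
    simp only [map_zero, mul_zero, add_zero] at hsq
    nlinarith [norm_nonneg (x - P), norm_nonneg x, norm_nonneg P]
  calc ‖T x - T P‖ = ‖T (x - P)‖ := by rw [map_sub]
    _ ≤ δ * ‖x - P‖ := hTy
    _ ≤ δ * ‖x‖ := mul_le_mul_of_nonneg_left hPn hδ.le

end Maximal

section EllTwo

local notation "⟪" x ", " y "⟫" => @inner ℂ _ _ x y

noncomputable def coordCLM (k : ℕ) : ellTwo →L[ℂ] ℂ :=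
  LinearMap.mkContinuous
    { toFun := fun y => y k
      map_add' := fun y z => congrFun (lp.coeFn_add y z) k
      map_smul' := fun c y => congrFun (lp.coeFn_smul c y) k }
    1 fun y => by
      simpa using lp.norm_apply_le_norm (by norm_num : (2:ℝ≥0∞) ≠ 0) y k

@[simp] lemma coordCLM_apply (k : ℕ) (y : ellTwo) : coordCLM k y = y k := rfl

lemma ellTwo_sum_sq_le (y : ellTwo) (m : ℕ) :
    ∑ j ∈ Finset.range m, ‖y j‖ ^ 2 ≤ ‖y‖ ^ 2 := by
  have h2 : (0:ℝ) < (2:ℝ≥0∞).toReal := by norm_num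
  have hsummable : Summable fun i : ℕ => ‖y i‖ ^ (2:ℝ≥0∞).toReal := (lp.memℓp y).summable h2
  have h1 : ‖y‖ ^ (2:ℝ≥0∞).toReal = ∑' i : ℕ, ‖y i‖ ^ (2:ℝ≥0∞).toReal :=
    lp.norm_rpow_eq_tsum h2 y
  have hconv : ∀ a : ℝ, a ^ (2:ℝ≥0∞).toReal = a ^ 2 := by
    intro a
    rw [show (2:ℝ≥0∞).toReal = ((2:ℕ):ℝ) by norm_num, Real.rpow_natCast]
  have hkey : ∑ j ∈ Finset.range m, ‖y j‖ ^ (2:ℝ≥0∞).toReal ≤ ‖y‖ ^ (2:ℝ≥0∞).toReal := by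
    rw [h1]
    exact Summable.sum_le_tsum _ (fun i _ => Real.rpow_nonneg (norm_nonneg _) _) hsummable
  rw [← hconv ‖y‖]
  calc ∑ j ∈ Finset.range m, ‖y j‖ ^ 2
      = ∑ j ∈ Finset.range m, ‖y j‖ ^ (2:ℝ≥0∞).toReal :=
        Finset.sum_congr rfl fun j _ => (hconv _).symm
    _ ≤ _ := hkey

lemma orthonormal_norm_sum {E : Type*} [NormedAddCommGroup E] [InnerProductSpace ℂ E]
    {ι : Type*} [Fintype ι] {v : ι → E} (hv : Orthonormal ℂ v) (l : ι → ℂ) :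
    ‖∑ i, l i • v i‖ ^ 2 = ∑ i, ‖l i‖ ^ 2 := by
  have h := hv.inner_sum l l Finset.univ
  have h2 : ‖∑ i, l i • v i‖ ^ 2 = RCLike.re (⟪∑ i, l i • v i, ∑ i, l i • v i⟫ : ℂ) :=
    norm_sq_eq_re_inner (𝕜 := ℂ) _
  rw [h2, h, map_sum]
  refine Finset.sum_congr rfl fun i _ => ?_
  rw [RCLike.conj_mul, ← RCLike.ofReal_pow, RCLike.ofReal_re]

lemma real_le_of_sq_le_sq {a b : ℝ} (_ha : 0 ≤ a) (hb : 0 ≤ b) (h : a ^ 2 ≤ b ^ 2) : a ≤ b := by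
  nlinarith

lemma orthonormal_lpsingle : Orthonormal ℂ (fun k : ℕ => (lp.single 2 k (1:ℂ) : ellTwo)) := by
  rw [orthonormal_iff_ite]
  intro i j
  rw [lp.inner_single_left]
  by_cases h : i = j
  · subst h
    rw [if_pos rfl, lp.single_apply_self]
    simp [RCLike.inner_apply]
  · rw [if_neg h, lp.single_apply_ne _ _ _ h]
    simp [RCLike.inner_apply]

end EllTwo

section Main

local notation "⟪" x ", " y "⟫" => @inner ℂ _ _ x y

/-- For a compact operator `T` from an infinite-dimensional Hilbert space `H` into a
Banach space `Y`, the Weyl numbers and the approximation numbers coincide: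
`x_n(T) = a_n(T)` for all `n ≥ 1`. -/
theorem weylNum_eq_approxNum_of_hilbert
    {H Y : Type*} [NormedAddCommGroup H] [InnerProductSpace ℂ H] [CompleteSpace H]
    [NormedAddCommGroup Y] [NormedSpace ℂ Y] [CompleteSpace Y]
    (hinf : ¬ FiniteDimensional ℂ H)
    (T : H →L[ℂ] Y) (hT : IsCompactOperator (T : H → Y))
    (n : ℕ) (hn : 1 ≤ n) :
    weylNum T n = approxNum T n := by
  classical
  have hbdd : BddAbove {r : ℝ | ∃ A : ellTwo →L[ℂ] H, ‖A‖ ≤ 1 ∧ r = approxNum (T.comp A) n} :=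
    ⟨approxNum T n, by rintro r ⟨A, hA, rfl⟩; exact approxNum_comp_le T hn A hA⟩
  have hne : Set.Nonempty {r : ℝ | ∃ A : ellTwo →L[ℂ] H, ‖A‖ ≤ 1 ∧ r = approxNum (T.comp A) n} :=
    ⟨approxNum (T.comp 0) n, 0, by simp, rfl⟩
  refine le_antisymm (csSup_le hne ?_) ?_
  · rintro r ⟨A, hA, rfl⟩
    exact approxNum_comp_le T hn A hA
  · refine le_of_forall_pos_le_add fun ε hε => ?_
    obtain ⟨m, f, hfo, hproj⟩ := exists_finite_orthonormal_proj T hT hε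
    set A : ellTwo →L[ℂ] H := ∑ k : Fin m, (coordCLM (k:ℕ)).smulRight (f k) with hA
    set B : H →L[ℂ] ellTwo :=
      ∑ k : Fin m, (innerSL ℂ (f k)).smulRight (lp.single 2 (k:ℕ) (1:ℂ)) with hB
    have hAapp : ∀ y : ellTwo, A y = ∑ k : Fin m, y (k:ℕ) • f k := fun y => by
      rw [hA]; simp
    have hBapp : ∀ x : H,
        B x = ∑ k : Fin m, (⟪f k, x⟫ : ℂ) • (lp.single 2 (k:ℕ) (1:ℂ) : ellTwo) :=
      fun x => by rw [hB]; simp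
    have hAnorm : ‖A‖ ≤ 1 := by
      refine ContinuousLinearMap.opNorm_le_bound _ zero_le_one fun y => ?_
      rw [one_mul, hAapp]
      refine real_le_of_sq_le_sq (norm_nonneg _) (norm_nonneg _) ?_
      rw [orthonormal_norm_sum hfo]
      calc (∑ k : Fin m, ‖y (k:ℕ)‖ ^ 2) = ∑ j ∈ Finset.range m, ‖y j‖ ^ 2 :=
            Fin.sum_univ_eq_sum_range (fun j => ‖y j‖ ^ 2) m
        _ ≤ ‖y‖ ^ 2 := ellTwo_sum_sq_le y m
    have hsingle : Orthonormal ℂ (fun k : Fin m => (lp.single 2 (k:ℕ) (1:ℂ) : ellTwo)) :=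
      orthonormal_lpsingle.comp (fun k : Fin m => (k:ℕ)) Fin.val_injective
    have hBnorm : ‖B‖ ≤ 1 := by
      refine ContinuousLinearMap.opNorm_le_bound _ zero_le_one fun x => ?_
      rw [one_mul, hBapp]
      refine real_le_of_sq_le_sq (norm_nonneg _) (norm_nonneg _) ?_
      rw [orthonormal_norm_sum hsingle]
      exact hfo.sum_inner_products_le x
    have hBcoord : ∀ (x : H) (j : Fin m), (B x : ℕ → ℂ) (j:ℕ) = ⟪f j, x⟫ := by
      intro x j
      rw [hBapp, lp.coeFn_sum, Finset.sum_apply]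
      rw [Finset.sum_eq_single j]
      · rw [lp.coeFn_smul, Pi.smul_apply, lp.single_apply_self, smul_eq_mul, mul_one]
      · intro k _ hkj
        rw [lp.coeFn_smul, Pi.smul_apply,
          lp.single_apply_ne 2 (k:ℕ) 1 (fun h => hkj (Fin.val_injective h).symm), smul_zero]
      · intro h
        exact absurd (Finset.mem_univ j) h
    have hABapp : ∀ x : H, A (B x) = ∑ k : Fin m, (⟪f k, x⟫ : ℂ) • f k := by
      intro x
      rw [hAapp]
      exact Finset.sum_congr rfl fun j _ => by rw [hBcoord]
    have hband : ∀ x : H, ‖T x - T (A (B x))‖ ≤ ε * ‖x‖ := by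
      intro x
      rw [hABapp x]
      exact hproj x
    have key : approxNum T n - ε ≤ approxNum (T.comp A) n := by
      refine le_csInf (approxNum_set_nonempty (T.comp A) hn) ?_
      rintro r ⟨G, hG, rfl⟩
      have hmem : ‖T - G.comp B‖ ∈ {r : ℝ | ∃ G' : H →L[ℂ] Y,
          Module.rank ℂ (LinearMap.range (G' : H →ₗ[ℂ] Y)) < (n : Cardinal) ∧ r = ‖T - G'‖} := by
        refine ⟨G.comp B, lt_of_le_of_lt ?_ hG, rfl⟩
        rw [ContinuousLinearMap.toLinearMap_comp]
        exact Submodule.rank_mono (LinearMap.range_comp_le_range _ _)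
      have h1 : approxNum T n ≤ ‖T - G.comp B‖ := csInf_le (approxNum_set_bddBelow T n) hmem
      have h2 : ‖T - G.comp B‖ ≤ ε + ‖T.comp A - G‖ := by
        have heq : T - G.comp B = (T - T.comp (A.comp B)) + (T.comp A - G).comp B := by
          ext x
          simp only [ContinuousLinearMap.sub_apply, ContinuousLinearMap.comp_apply,
            ContinuousLinearMap.add_apply]
          abel
        rw [heq]
        refine (norm_add_le _ _).trans (add_le_add ?_ ?_)
        · refine ContinuousLinearMap.opNorm_le_bound _ hε.le fun x => ?_
          simp only [ContinuousLinearMap.sub_apply, ContinuousLinearMap.comp_apply]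
          exact hband x
        · calc ‖(T.comp A - G).comp B‖ ≤ ‖T.comp A - G‖ * ‖B‖ :=
                ContinuousLinearMap.opNorm_comp_le _ _
            _ ≤ ‖T.comp A - G‖ * 1 := mul_le_mul_of_nonneg_left hBnorm (norm_nonneg _)
            _ = ‖T.comp A - G‖ := mul_one _
      linarith
    have hsup : approxNum (T.comp A) n ≤ weylNum T n := le_csSup hbdd ⟨A, hAnorm, rfl⟩
    linarith

end Main
end

section
/- For any bounded linear operator T between Banach spaces and all n ∈ ℕ, one has n^{1/2} · x_n(T) ≤ π_2(T), where π_2(T) is the absolutely 2-summing norm of T. -/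
open scoped ENNReal

/-- `C` is an absolutely 2-summing bound for `T`: for all finite families `x₁, …, x_k`,
`(∑ ‖T x_j‖²)^{1/2} ≤ C · sup_{‖x*‖ ≤ 1} (∑ |⟨x_j, x*⟩|²)^{1/2}`.
The 2-summing norm `π₂(T)` is the least such `C`. -/
def IsPi2Bound {E F : Type*} [NormedAddCommGroup E] [NormedSpace ℂ E]
    [NormedAddCommGroup F] [NormedSpace ℂ F] (T : E →L[ℂ] F) (C : ℝ) : Prop :=
  ∀ (k : ℕ) (x : Fin k → E),
    (∑ j, ‖T (x j)‖ ^ 2) ^ ((1 : ℝ) / 2) ≤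
      C * sSup {r : ℝ | ∃ f : E →L[ℂ] ℂ, ‖f‖ ≤ 1 ∧
        r = (∑ j, ‖f (x j)‖ ^ 2) ^ ((1 : ℝ) / 2)}

section Aux

variable {E F H : Type*} [NormedAddCommGroup E] [NormedSpace ℂ E]
  [NormedAddCommGroup F] [NormedSpace ℂ F]
  [NormedAddCommGroup H] [InnerProductSpace ℂ H]

lemma approxNum_le (T G : E →L[ℂ] F) (n : ℕ)
    (hG : Module.rank ℂ (LinearMap.range (G : E →ₗ[ℂ] F)) < (n : Cardinal)) :
    approxNum T n ≤ ‖T - G‖ := by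
  apply csInf_le
  · exact ⟨0, by rintro r ⟨G', -, rfl⟩; positivity⟩
  · exact ⟨G, hG, rfl⟩

end Aux

universe u w

/-- Key step: if `b < a_n(S)` and fewer than `n` vectors are given, there is a unit vector
orthogonal to all of them on which `S` is large. -/
lemma exists_next {F : Type u} {H : Type w} [NormedAddCommGroup F] [NormedSpace ℂ F]
    [NormedAddCommGroup H] [InnerProductSpace ℂ H]
    (S : H →L[ℂ] F) (n k : ℕ) (hk : k < n) (v : Fin k → H)
    (b : ℝ) (hb : 0 < b) (hbe : b < approxNum S n) :
    ∃ e : H, ‖e‖ = 1 ∧ (∀ i, inner (𝕜 := ℂ) (v i) e = 0) ∧ b < ‖S e‖ := by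
  by_contra hcon
  push_neg at hcon
  set K : Submodule ℂ H := Submodule.span ℂ (Set.range v) with hK
  haveI : FiniteDimensional ℂ K := FiniteDimensional.span_of_finite ℂ (Set.finite_range v)
  set P : H →L[ℂ] H := K.subtypeL.comp (K.orthogonalProjectionOnto) with hP
  set G : H →L[ℂ] F := S.comp P with hG
  -- rank bound
  have hrank : Module.rank ℂ (LinearMap.range (G : H →ₗ[ℂ] F)) < (n : Cardinal) := by
    have h1 : LinearMap.range (G : H →ₗ[ℂ] F)
        = Submodule.map (S : H →ₗ[ℂ] F) (LinearMap.range (P : H →ₗ[ℂ] H)) := by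
      rw [← LinearMap.range_comp]; rfl
    have h2 : LinearMap.range (P : H →ₗ[ℂ] H) ≤ K := by
      rintro x ⟨y, rfl⟩
      exact (K.orthogonalProjectionOnto y).2
    have hr : Cardinal.mk (Set.range v) ≤ (k : Cardinal) := by
      simpa using Cardinal.mk_range_le_lift (f := v)
    have h4 : Module.rank ℂ (LinearMap.range (P : H →ₗ[ℂ] H)) ≤ (k : Cardinal) :=
      le_trans (Submodule.rank_mono h2) (le_trans (rank_span_le (R := ℂ) (Set.range v)) hr)
    have h3 := lift_rank_map_le (S : H →ₗ[ℂ] F) (LinearMap.range (P : H →ₗ[ℂ] H))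
    rw [← h1] at h3
    have h5 := le_trans h3 (Cardinal.lift_le.mpr h4)
    rw [Cardinal.lift_natCast] at h5
    rw [← Cardinal.lift_lt.{u, w}, Cardinal.lift_natCast]
    exact lt_of_le_of_lt h5 (by exact_mod_cast hk)
  -- every vector in the orthogonal complement is mapped small
  have hsmall : ∀ x ∈ Kᗮ, ‖S x‖ ≤ b * ‖x‖ := by
    intro x hx
    rcases eq_or_ne x 0 with rfl | hx0
    · simp
    · set e : H := ‖x‖⁻¹ • x with he
      have hne : (‖x‖ : ℝ) ≠ 0 := norm_ne_zero_iff.mpr hx0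
      have hnorme : ‖e‖ = 1 := by
        rw [he, norm_smul, norm_inv, norm_norm, inv_mul_cancel₀ hne]
      have hemem : e ∈ Kᗮ := Kᗮ.smul_mem _ hx
      have horth : ∀ i, inner (𝕜 := ℂ) (v i) e = 0 := fun i =>
        (Submodule.mem_orthogonal K e).mp hemem (v i)
          (Submodule.subset_span (Set.mem_range_self i))
      have hle := hcon e hnorme horth
      have hxe : (‖x‖ : ℝ) • e = x := by
        rw [he, smul_smul, mul_inv_cancel₀ hne, one_smul]
      have hSx : S x = ‖x‖ • S e := by
        conv_lhs => rw [← hxe]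
        rw [S.map_smul_of_tower]
      rw [hSx, norm_smul, norm_norm, mul_comm]
      exact mul_le_mul_of_nonneg_right hle (norm_nonneg x)
  -- bound the operator norm of S - G
  have hSGb : ‖S - G‖ ≤ b := by
    apply ContinuousLinearMap.opNorm_le_bound _ hb.le
    intro x
    have hmem : x - P x ∈ Kᗮ := Submodule.sub_starProjection_mem_orthogonal (K := K) x
    have heq : (S - G) x = S (x - P x) := by
      simp [hG, map_sub]
    have hperp : inner (𝕜 := ℂ) (x - P x) (P x : H) = 0 := by
      exact (Submodule.mem_orthogonal' K _).mp hmem (P x) (K.orthogonalProjectionOnto x).2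
    have hnx : ‖x - P x‖ ≤ ‖x‖ := by
      have hpyth := norm_add_sq_eq_norm_sq_add_norm_sq_of_inner_eq_zero (x - P x) (P x) hperp
      rw [sub_add_cancel] at hpyth
      nlinarith [norm_nonneg (x - P x), norm_nonneg x, norm_nonneg (P x)]
    calc ‖(S - G) x‖ = ‖S (x - P x)‖ := by rw [heq]
      _ ≤ b * ‖x - P x‖ := hsmall _ hmem
      _ ≤ b * ‖x‖ := mul_le_mul_of_nonneg_left hnx hb.le
  have := approxNum_le S G n hrank
  linarith

section Aux2

variable {E F H : Type*} [NormedAddCommGroup E] [NormedSpace ℂ E]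
  [NormedAddCommGroup F] [NormedSpace ℂ F]
  [NormedAddCommGroup H] [InnerProductSpace ℂ H]

/-- Build an orthonormal family on which `S` is uniformly large. -/
lemma exists_orthonormal_family (S : H →L[ℂ] F) (n : ℕ) (b : ℝ) (hb : 0 < b)
    (hbe : b < approxNum S n) (m : ℕ) (hm : m ≤ n) :
    ∃ e : Fin m → H, Orthonormal ℂ e ∧ ∀ j, b < ‖S (e j)‖ := by
  induction m with
  | zero =>
    refine ⟨fun i => i.elim0, ?_, fun j => j.elim0⟩
    rw [orthonormal_iff_ite]
    intro i; exact i.elim0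
  | succ m ih =>
    obtain ⟨e, he, hbig⟩ := ih (le_trans (Nat.le_succ m) hm)
    obtain ⟨e', he'1, he'2, he'3⟩ := exists_next S n m (lt_of_lt_of_le (Nat.lt_succ_self m) hm)
      e b hb hbe
    refine ⟨Fin.snoc e e', ?_, ?_⟩
    · rw [orthonormal_iff_ite]
      intro i j
      refine Fin.lastCases ?_ (fun i => ?_) i <;> [skip; refine Fin.lastCases ?_ (fun j => ?_) j]
      · refine Fin.lastCases ?_ (fun j => ?_) j
        · simp [Fin.snoc_last, inner_self_eq_norm_sq_to_K, he'1]
        · have h0 : inner (𝕜 := ℂ) e' (e j) = 0 := inner_eq_zero_symm.mp (he'2 j)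
          simp [Fin.snoc_last, Fin.snoc_castSucc, h0, (Fin.castSucc_lt_last j).ne']
      · simp [Fin.snoc_last, Fin.snoc_castSucc, he'2 i, (Fin.castSucc_lt_last i).ne]
      · have := (orthonormal_iff_ite.mp he) i j
        simpa [Fin.snoc_castSucc, Fin.castSucc_inj] using this
    · intro j
      refine Fin.lastCases ?_ (fun j => ?_) j
      · simpa [Fin.snoc_last] using he'3
      · simpa [Fin.snoc_castSucc] using hbig j

variable [CompleteSpace H]

/-- The core estimate: `n^{1/2} · a_n(S) ≤ C` for a 2-summing operator on Hilbert space. -/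
lemma sqrt_n_mul_approxNum_le (S : H →L[ℂ] F) (C : ℝ) (hC : 0 ≤ C)
    (hbound : IsPi2Bound S C) (n : ℕ) (hn : 1 ≤ n) :
    (n : ℝ) ^ ((1 : ℝ) / 2) * approxNum S n ≤ C := by
  have hnpos : (0 : ℝ) < (n : ℝ) ^ ((1 : ℝ) / 2) :=
    Real.rpow_pos_of_pos (by exact_mod_cast hn) _
  refine le_of_forall_pos_le_add fun δ hδ => ?_
  set ε : ℝ := δ / ((n : ℝ) ^ ((1 : ℝ) / 2)) with hε
  have hεpos : 0 < ε := div_pos hδ hnpos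
  have hδeq : (n : ℝ) ^ ((1 : ℝ) / 2) * ε = δ := by
    rw [hε, mul_div_cancel₀ _ hnpos.ne']
  rcases le_or_gt (approxNum S n) ε with hcase | hcase
  · calc (n : ℝ) ^ ((1 : ℝ) / 2) * approxNum S n
        ≤ (n : ℝ) ^ ((1 : ℝ) / 2) * ε := mul_le_mul_of_nonneg_left hcase hnpos.le
      _ = δ := hδeq
      _ ≤ C + δ := le_add_of_nonneg_left hC
  · set b : ℝ := approxNum S n - ε with hbdef
    have hbpos : 0 < b := by simp only [hbdef]; linarith
    have hblt : b < approxNum S n := by simp only [hbdef]; linarith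
    obtain ⟨e, he, hbig⟩ := exists_orthonormal_family S n b hbpos hblt n le_rfl
    have key := hbound n e
    -- the sup is at most 1 by Bessel's inequality
    have hsup : sSup {r : ℝ | ∃ f : H →L[ℂ] ℂ, ‖f‖ ≤ 1 ∧
        r = (∑ j, ‖f (e j)‖ ^ 2) ^ ((1 : ℝ) / 2)} ≤ 1 := by
      apply Real.sSup_le _ zero_le_one
      rintro r ⟨f, hf, rfl⟩
      set y : H := (InnerProductSpace.toDual ℂ H).symm f with hy
      have hfy : ∀ x : H, f x = inner (𝕜 := ℂ) y x := fun x =>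
        (InnerProductSpace.toDual_symm_apply).symm
      have hyn : ‖y‖ ≤ 1 := by
        rw [hy]; rw [LinearIsometryEquiv.norm_map]; exact hf
      have hBessel : ∑ j, ‖f (e j)‖ ^ 2 ≤ 1 := by
        have := he.sum_inner_products_le (s := Finset.univ) y
        calc ∑ j, ‖f (e j)‖ ^ 2 = ∑ j, ‖inner (𝕜 := ℂ) (e j) y‖ ^ 2 := by
              refine Finset.sum_congr rfl fun j _ => ?_
              rw [hfy, norm_inner_symm]
          _ ≤ ‖y‖ ^ 2 := this
          _ ≤ 1 := by nlinarith [norm_nonneg y]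
      have hnn : (0 : ℝ) ≤ ∑ j, ‖f (e j)‖ ^ 2 := by positivity
      calc (∑ j, ‖f (e j)‖ ^ 2) ^ ((1 : ℝ) / 2) ≤ (1 : ℝ) ^ ((1 : ℝ) / 2) :=
            Real.rpow_le_rpow hnn hBessel (by norm_num)
        _ = 1 := Real.one_rpow _
    -- lower bound for the left-hand side
    have hlow : (n : ℝ) ^ ((1 : ℝ) / 2) * b ≤ (∑ j, ‖S (e j)‖ ^ 2) ^ ((1 : ℝ) / 2) := by
      have hsum : (n : ℝ) * b ^ 2 ≤ ∑ j : Fin n, ‖S (e j)‖ ^ 2 := by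
        calc (n : ℝ) * b ^ 2 = ∑ _j : Fin n, b ^ 2 := by
              rw [Finset.sum_const, Finset.card_univ, Fintype.card_fin, nsmul_eq_mul]
          _ ≤ ∑ j, ‖S (e j)‖ ^ 2 := Finset.sum_le_sum fun j _ => by
              have := hbig j
              nlinarith [norm_nonneg (S (e j))]
      have h1 : ((n : ℝ) * b ^ 2) ^ ((1 : ℝ) / 2) ≤ (∑ j, ‖S (e j)‖ ^ 2) ^ ((1 : ℝ) / 2) :=
        Real.rpow_le_rpow (by positivity) hsum (by norm_num)
      have h2 : ((n : ℝ) * b ^ 2) ^ ((1 : ℝ) / 2)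
          = (n : ℝ) ^ ((1 : ℝ) / 2) * b := by
        rw [Real.mul_rpow (by positivity) (by positivity)]
        congr 1
        rw [← Real.rpow_natCast b 2, ← Real.rpow_mul hbpos.le]
        norm_num
      linarith
    have hfin : (n : ℝ) ^ ((1 : ℝ) / 2) * b ≤ C := by
      calc (n : ℝ) ^ ((1 : ℝ) / 2) * b ≤ (∑ j, ‖S (e j)‖ ^ 2) ^ ((1 : ℝ) / 2) := hlow
        _ ≤ C * sSup {r : ℝ | ∃ f : H →L[ℂ] ℂ, ‖f‖ ≤ 1 ∧
              r = (∑ j, ‖f (e j)‖ ^ 2) ^ ((1 : ℝ) / 2)} := key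
        _ ≤ C * 1 := mul_le_mul_of_nonneg_left hsup hC
        _ = C := mul_one C
    have : (n : ℝ) ^ ((1 : ℝ) / 2) * approxNum S n
        = (n : ℝ) ^ ((1 : ℝ) / 2) * b + (n : ℝ) ^ ((1 : ℝ) / 2) * ε := by
      rw [hbdef]; ring
    rw [this, hδeq]
    linarith

/-- Composing with a norm-`≤ 1` operator preserves a 2-summing bound. -/
lemma isPi2Bound_comp (T : E →L[ℂ] F) (C : ℝ) (hC : 0 ≤ C) (hbound : IsPi2Bound T C)
    (A : H →L[ℂ] E) (hA : ‖A‖ ≤ 1) : IsPi2Bound (T.comp A) C := by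
  intro k x
  have key := hbound k (fun j => A (x j))
  have hset : sSup {r : ℝ | ∃ f : E →L[ℂ] ℂ, ‖f‖ ≤ 1 ∧
        r = (∑ j, ‖f (A (x j))‖ ^ 2) ^ ((1 : ℝ) / 2)}
      ≤ sSup {r : ℝ | ∃ g : H →L[ℂ] ℂ, ‖g‖ ≤ 1 ∧
        r = (∑ j, ‖g (x j)‖ ^ 2) ^ ((1 : ℝ) / 2)} := by
    have hbdd : BddAbove {r : ℝ | ∃ g : H →L[ℂ] ℂ, ‖g‖ ≤ 1 ∧
        r = (∑ j, ‖g (x j)‖ ^ 2) ^ ((1 : ℝ) / 2)} := by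
      refine ⟨(∑ j, ‖x j‖ ^ 2) ^ ((1 : ℝ) / 2), ?_⟩
      rintro r ⟨g, hg, rfl⟩
      apply Real.rpow_le_rpow (by positivity) _ (by norm_num)
      refine Finset.sum_le_sum fun j _ => ?_
      have h1 : ‖g (x j)‖ ≤ ‖x j‖ := by
        calc ‖g (x j)‖ ≤ ‖g‖ * ‖x j‖ := g.le_opNorm _
          _ ≤ 1 * ‖x j‖ := mul_le_mul_of_nonneg_right hg (norm_nonneg _)
          _ = ‖x j‖ := one_mul _
      nlinarith [norm_nonneg (g (x j))]
    have hnonneg : (0 : ℝ) ≤ sSup {r : ℝ | ∃ g : H →L[ℂ] ℂ, ‖g‖ ≤ 1 ∧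
        r = (∑ j, ‖g (x j)‖ ^ 2) ^ ((1 : ℝ) / 2)} := by
      apply le_csSup hbdd
      refine ⟨0, by simp, ?_⟩
      simp only [ContinuousLinearMap.zero_apply, norm_zero]
      rw [Finset.sum_const, Finset.card_univ]
      norm_num
    apply Real.sSup_le _ hnonneg
    rintro r ⟨f, hf, rfl⟩
    apply le_csSup hbdd
    refine ⟨f.comp A, ?_, rfl⟩
    calc ‖f.comp A‖ ≤ ‖f‖ * ‖A‖ := f.opNorm_comp_le A
      _ ≤ 1 * 1 := mul_le_mul hf hA (norm_nonneg A) zero_le_one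
      _ = 1 := one_mul 1
  calc (∑ j, ‖(T.comp A) (x j)‖ ^ 2) ^ ((1 : ℝ) / 2)
      = (∑ j, ‖T (A (x j))‖ ^ 2) ^ ((1 : ℝ) / 2) := rfl
    _ ≤ C * sSup {r : ℝ | ∃ f : E →L[ℂ] ℂ, ‖f‖ ≤ 1 ∧
          r = (∑ j, ‖f (A (x j))‖ ^ 2) ^ ((1 : ℝ) / 2)} := key
    _ ≤ C * sSup {r : ℝ | ∃ g : H →L[ℂ] ℂ, ‖g‖ ≤ 1 ∧
          r = (∑ j, ‖g (x j)‖ ^ 2) ^ ((1 : ℝ) / 2)} :=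
        mul_le_mul_of_nonneg_left hset hC

end Aux2

/-- Pietsch's inequality `n^{1/2} · x_n(T) ≤ π₂(T)`: for any bounded linear operator
`T` between Banach spaces and any absolutely 2-summing bound `C` for `T`,
`n^{1/2} · x_n(T) ≤ C` for all `n ≥ 1`. -/
theorem sqrt_n_mul_weylNum_le_pi2
    {E F : Type*} [NormedAddCommGroup E] [NormedSpace ℂ E] [CompleteSpace E]
    [NormedAddCommGroup F] [NormedSpace ℂ F] [CompleteSpace F]
    (T : E →L[ℂ] F) (C : ℝ) (hC : 0 ≤ C) (hbound : IsPi2Bound T C)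
    (n : ℕ) (hn : 1 ≤ n) :
    (n : ℝ) ^ ((1 : ℝ) / 2) * weylNum T n ≤ C := by
  have hnpos : (0 : ℝ) < (n : ℝ) ^ ((1 : ℝ) / 2) :=
    Real.rpow_pos_of_pos (by exact_mod_cast hn) _
  have hsup : weylNum T n ≤ C / ((n : ℝ) ^ ((1 : ℝ) / 2)) := by
    apply Real.sSup_le _ (div_nonneg hC hnpos.le)
    rintro r ⟨A, hA, rfl⟩
    have h2 : IsPi2Bound (T.comp A) C := isPi2Bound_comp T C hC hbound A hA
    have h3 := sqrt_n_mul_approxNum_le (T.comp A) C hC h2 n hn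
    rw [le_div_iff₀ hnpos, mul_comm]
    exact h3
  calc (n : ℝ) ^ ((1 : ℝ) / 2) * weylNum T n
      ≤ (n : ℝ) ^ ((1 : ℝ) / 2) * (C / ((n : ℝ) ^ ((1 : ℝ) / 2))) :=
        mul_le_mul_of_nonneg_left hsup hnpos.le
    _ = C := by field_simp
end
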